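/- Let H : ℝ → ℝ be continuous and coercive, and define H⁻(p) = inf_{q ≤ p} H(q). Then the set A_{H⁻} associated to the continuous non-increasing function H⁻ equals the set A₀ of all points p ∈ ℝ such that p⁻ = p < p⁺ and for every q ∈ ℝ with (q⁻, q⁺) ∩ (p, p⁺) ≠ ∅ one has H(q) ≥ H(p). -/
import Mathlib


open Set Filter Topology

/-- `p⁻ = sup {q < p : H(q) ≥ H(p)}`. -/
noncomputable def pminus (H : ℝ → ℝ) (p : ℝ) : ℝ :=
  sSup {q : ℝ | q < p ∧ H p ≤ H q}

/-- `p⁺ = inf {q > p : H(q) ≤ H(p)}`, with `inf ∅ = +∞` (extended reals). -/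
noncomputable def pplus (H : ℝ → ℝ) (p : ℝ) : EReal :=
  sInf (Real.toEReal '' {q : ℝ | p < q ∧ H q ≤ H p})

/-- `H(p) → +∞` as `|p| → +∞`. -/
def Coercive (H : ℝ → ℝ) : Prop :=
  Tendsto H atTop atTop ∧ Tendsto H atBot atTop

/-- `F(p) → +∞` as `p → -∞`. -/
def SemiCoercive (F : ℝ → ℝ) : Prop := Tendsto F atBot atTop

/-- the open interval `(a⁻, a⁺)` (upper endpoint possibly `+∞`). -/
def ooMM (H : ℝ → ℝ) (a : ℝ) : Set ℝ :=
  {r : ℝ | pminus H a < r ∧ (r : EReal) < pplus H a}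

/-- the open interval `(p, p⁺)` (upper endpoint possibly `+∞`). -/
def ooUp (H : ℝ → ℝ) (p : ℝ) : Set ℝ :=
  {r : ℝ | p < r ∧ (r : EReal) < pplus H p}

/-- the closed interval `[a⁻, a⁺]` (upper endpoint possibly `+∞`). -/
def ccMM (H : ℝ → ℝ) (a : ℝ) : Set ℝ :=
  {r : ℝ | pminus H a ≤ r ∧ (r : EReal) ≤ pplus H a}

/-- `A` is a set limiter for `H`. -/
def IsSetLimiter (H : ℝ → ℝ) (A : Set ℝ) : Prop :=
  (∀ a ∈ A, (pminus H a : EReal) ≠ pplus H a) ∧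
  (∀ a ∈ A, ∀ b ∈ A, a < b → H b ≤ H a) ∧
  (∀ p : ℝ, pminus H p < p → ∃ a ∈ A, (Ioo (pminus H p) p ∩ ooMM H a).Nonempty) ∧
  (∀ p : ℝ, (p : EReal) < pplus H p → ∃ a ∈ A, (ooUp H p ∩ ooMM H a).Nonempty)

open Classical in
/-- The `A`-limited flux function `F_A`: equal to `H(a)` on `[a⁻, a⁺]` for `a ∈ A`,
and to `H` elsewhere. -/
noncomputable def limFlux (H : ℝ → ℝ) (A : Set ℝ) (p : ℝ) : ℝ :=
  if h : ∃ a, a ∈ A ∧ p ∈ ccMM H a then H h.choose else H p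

/-- Condition (S) in the definition of `A_F`. -/
def CondS (H F : ℝ → ℝ) (p : ℝ) : Prop :=
  pminus H p ≠ p ∧ H p ≤ F p ∧
    ∀ q : ℝ, H q ≤ F q → (ooMM H q ∩ Ioo (pminus H p) p).Nonempty → H q ≤ H p

/-- Condition (T) in the definition of `A_F`. -/
def CondT (H F : ℝ → ℝ) (p : ℝ) : Prop :=
  (p : EReal) ≠ pplus H p ∧ F p ≤ H p ∧
    ∀ q : ℝ, F q ≤ H q → (ooMM H q ∩ ooUp H p).Nonempty → H p ≤ H q

/-- The set `A_F` associated with a boundary function `F`. -/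
def limiterOf (H F : ℝ → ℝ) : Set ℝ := {p : ℝ | CondS H F p ∨ CondT H F p}

/-- `H⁻(p) = inf_{q ≤ p} H(q)`. -/
noncomputable def Hminus (H : ℝ → ℝ) (p : ℝ) : ℝ := sInf (H '' Iic p)

/-- The set `A₀` of points `p` with `p⁻ = p < p⁺` such that every `q` with
`(q⁻, q⁺) ∩ (p, p⁺) ≠ ∅` satisfies `H(q) ≥ H(p)`. -/
def setA0 (H : ℝ → ℝ) : Set ℝ :=
  {p : ℝ | pminus H p = p ∧ (p : EReal) < pplus H p ∧
    ∀ q : ℝ, (ooMM H q ∩ ooUp H p).Nonempty → H p ≤ H q}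

section Aux

variable {H : ℝ → ℝ}

/-- A continuous coercive function is bounded below. -/
lemma aux_bddBelow (hH : Continuous H) (hcoer : Coercive H) : ∃ C, ∀ x, C ≤ H x := by
  obtain ⟨b, hb⟩ := eventually_atTop.mp (hcoer.1.eventually (eventually_ge_atTop (0:ℝ)))
  obtain ⟨a, ha⟩ := eventually_atBot.mp (hcoer.2.eventually (eventually_ge_atTop (0:ℝ)))
  set a' := min a b with ha'
  obtain ⟨q0, hq0K, hq0⟩ := isCompact_Icc.exists_isMinOn (s := Icc a' b)
    ⟨a', le_refl _, min_le_right _ _⟩ hH.continuousOn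
  refine ⟨min 0 (H q0), fun x => ?_⟩
  rcases le_total x a' with h | h
  · exact le_trans (min_le_left _ _) (ha x (le_trans h (min_le_left _ _)))
  · rcases le_total x b with h2 | h2
    · exact le_trans (min_le_right _ _) (hq0 ⟨h, h2⟩)
    · exact le_trans (min_le_left _ _) (hb x h2)

lemma aux_setS_nonempty (hcoer : Coercive H) (p : ℝ) :
    {q : ℝ | q < p ∧ H p ≤ H q}.Nonempty := by
  obtain ⟨a, ha⟩ := eventually_atBot.mp (hcoer.2.eventually (eventually_ge_atTop (H p)))
  exact ⟨min a (p - 1), lt_of_le_of_lt (min_le_right _ _) (by linarith),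
    ha _ (min_le_left _ _)⟩

lemma aux_pminus_le (hcoer : Coercive H) (p : ℝ) : pminus H p ≤ p :=
  csSup_le (aux_setS_nonempty hcoer p) (fun q hq => hq.1.le)

lemma aux_le_pplus (H : ℝ → ℝ) (p : ℝ) : (p : EReal) ≤ pplus H p := by
  apply le_sInf
  rintro x ⟨q, ⟨hq, _⟩, rfl⟩
  exact_mod_cast hq.le

lemma aux_Hminus_le (hH : Continuous H) (hcoer : Coercive H) (p q : ℝ) (hq : q ≤ p) :
    Hminus H p ≤ H q := by
  obtain ⟨C, hC⟩ := aux_bddBelow hH hcoer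
  exact csInf_le ⟨C, by rintro x ⟨r, _, rfl⟩; exact hC r⟩ ⟨q, hq, rfl⟩

lemma aux_pminus_eq (hH : Continuous H) (hcoer : Coercive H) (p : ℝ)
    (hpp : (p : EReal) < pplus H p)
    (hcond : ∀ q, (ooMM H q ∩ ooUp H p).Nonempty → H p ≤ H q) : pminus H p = p := by
  by_contra hne
  have hlt : pminus H p < p := lt_of_le_of_ne (aux_pminus_le hcoer p) hne
  set m := (pminus H p + p) / 2 with hm
  have hm1 : pminus H p < m := by rw [hm]; linarith
  have hm2 : m < p := by rw [hm]; linarith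
  have hA : ∀ r, m ≤ r → r < p → H r < H p := by
    intro r h1 h2
    by_contra h
    push_neg at h
    have : r ≤ pminus H p := le_csSup ⟨p, fun x hx => hx.1.le⟩ ⟨h2, h⟩
    linarith
  obtain ⟨p', hp1, hp2⟩ := EReal.exists_between_coe_real hpp
  have hpp' : p < p' := by exact_mod_cast hp1
  have hB : ∀ r, p < r → r ≤ p' → H p < H r := by
    intro r h1 h2
    by_contra h
    push_neg at h
    have h3 : pplus H p ≤ (r : EReal) := sInf_le ⟨r, ⟨h1, h⟩, rfl⟩
    have h4 : pplus H p ≤ (p' : EReal) := h3.trans (by exact_mod_cast h2)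
    exact absurd hp2 (not_lt.mpr h4)
  have hKne : (Icc m p').Nonempty := ⟨m, le_refl _, by linarith⟩
  obtain ⟨q0, hq0K, hq0⟩ := isCompact_Icc.exists_isMinOn hKne hH.continuousOn
  obtain ⟨q, hqM, hqG⟩ := (isCompact_Icc.inter_right
    (isClosed_singleton.preimage hH)).exists_isGreatest
    (⟨q0, hq0K, rfl⟩ : (Icc m p' ∩ H ⁻¹' {H q0}).Nonempty)
  have hqc : H q = H q0 := hqM.2
  have hqlt : H q < H p := by
    have h1 : H q0 ≤ H m := hq0 ⟨le_refl _, by linarith⟩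
    have h2 : H m < H p := hA m le_rfl hm2
    rw [hqc]; linarith
  have hqm : m ≤ q := hqM.1.1
  have hqp : q < p := by
    rcases lt_trichotomy q p with h | h | h
    · exact h
    · exact absurd hqlt (by rw [h]; exact lt_irrefl _)
    · exact absurd hqlt (not_lt.mpr (hB q h hqM.1.2).le)
  have hC2 : ∀ r, q < r → r ≤ p' → H q < H r := by
    intro r h1 h2
    have hrK : r ∈ Icc m p' := ⟨le_trans hqm h1.le, h2⟩
    have hle : H q0 ≤ H r := hq0 hrK
    rcases eq_or_lt_of_le hle with he | h
    · exact absurd (hqG ⟨hrK, he.symm⟩) (not_le.mpr h1)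
    · rw [hqc]; exact h
  have hq_pplus : (p' : EReal) ≤ pplus H q := by
    apply le_sInf
    rintro x ⟨r, ⟨hr1, hr2⟩, rfl⟩
    by_contra h
    push_neg at h
    have hr : r < p' := by exact_mod_cast h
    exact absurd hr2 (not_le.mpr (hC2 r hr1 hr.le))
  set t := (p + p') / 2 with ht
  have ht1 : p < t := by rw [ht]; linarith
  have ht2 : t < p' := by rw [ht]; linarith
  have hmem : t ∈ ooMM H q ∩ ooUp H p := by
    refine ⟨⟨lt_of_le_of_lt (aux_pminus_le hcoer q) (lt_trans hqp ht1), ?_⟩, ht1, ?_⟩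
    · exact lt_of_lt_of_le (by exact_mod_cast ht2) hq_pplus
    · exact lt_trans (by exact_mod_cast ht2 : (t : EReal) < (p' : EReal)) hp2
  have := hcond q ⟨t, hmem⟩
  linarith

end Aux

theorem stmt18 (H : ℝ → ℝ) (hH : Continuous H) (hcoer : Coercive H) :
    limiterOf H (Hminus H) = setA0 H := by
  ext p
  simp only [limiterOf, setA0, Set.mem_setOf_eq]
  constructor
  · rintro (⟨hne, hle, _⟩ | ⟨hne, _, hcond⟩)
    · exfalso
      apply hne
      have hall : ∀ q ≤ p, H p ≤ H q := fun q hq =>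
        le_trans hle (aux_Hminus_le hH hcoer p q hq)
      have hset : {q : ℝ | q < p ∧ H p ≤ H q} = Iio p := by
        ext q
        exact ⟨fun h => h.1, fun h => ⟨h, hall q h.le⟩⟩
      rw [pminus, hset, csSup_Iio]
    · have hpp : (p : EReal) < pplus H p := lt_of_le_of_ne (aux_le_pplus H p) hne
      have hcond' : ∀ q, (ooMM H q ∩ ooUp H p).Nonempty → H p ≤ H q := fun q hq =>
        hcond q (aux_Hminus_le hH hcoer q q le_rfl) hq
      exact ⟨aux_pminus_eq hH hcoer p hpp hcond', hpp, hcond'⟩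
  · rintro ⟨_, h2, h3⟩
    exact Or.inr ⟨ne_of_lt h2, aux_Hminus_le hH hcoer p p le_rfl, fun q _ hq => h3 q hq⟩
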